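/- Let σ > 0 and let b, g : ℝ → ℝ be measurable and locally integrable functions with g ∈ L¹(ℝ), and assume that both normalizing constants C_{b,σ} = ∫_ℝ exp(∫₀ˣ 2b(u)/σ² du) dx and C_{b+g,σ} = ∫_ℝ exp(∫₀ˣ 2(b(u)+g(u))/σ² du) dx are finite. Then for every x ∈ ℝ, q_{b+g}(x)/q_b(x) ≤ exp(4·σ⁻²·‖g‖_{L¹}); in particular sup_{x∈ℝ} q_{b+g}(x)/q_b(x) ≤ exp(4·σ⁻²·‖g‖_{L¹}). -/

import Mathlib

set_option maxHeartbeats 1000000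


open MeasureTheory

/-- The normalizing constant `C_{b,σ} = ∫_ℝ exp(∫₀ˣ 2 b(u)/σ² du) dx`. -/
noncomputable def normConst (b : ℝ → ℝ) (σ : ℝ) : ℝ :=
  ∫ x : ℝ, Real.exp (∫ u in (0:ℝ)..x, 2 * b u / σ ^ 2)

/-- The invariant density `q_b(x) = C_{b,σ}⁻¹ exp(∫₀ˣ 2 b(u)/σ² du)`. -/
noncomputable def invDensity (b : ℝ → ℝ) (σ : ℝ) (x : ℝ) : ℝ :=
  (normConst b σ)⁻¹ * Real.exp (∫ u in (0:ℝ)..x, 2 * b u / σ ^ 2)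

/-- Perturbation bound for the ratio of invariant densities:
`q_{b+g}(x)/q_b(x) ≤ exp(4 σ⁻² ‖g‖_{L¹})` for every `x`, and hence for the supremum. -/
theorem stmt9 (σ : ℝ) (hσ : 0 < σ) (b g : ℝ → ℝ)
    (hbm : Measurable b) (hgm : Measurable g)
    (hbl : LocallyIntegrable b) (hgl : LocallyIntegrable g)
    (hg1 : Integrable g)
    (hCb : Integrable fun x : ℝ => Real.exp (∫ u in (0:ℝ)..x, 2 * b u / σ ^ 2))
    (hCbg : Integrable fun x : ℝ => Real.exp (∫ u in (0:ℝ)..x, 2 * (b u + g u) / σ ^ 2)) :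
    (∀ x : ℝ, invDensity (fun u => b u + g u) σ x / invDensity b σ x ≤
      Real.exp (4 / σ ^ 2 * ∫ u : ℝ, |g u|)) ∧
    (⨆ x : ℝ, invDensity (fun u => b u + g u) σ x / invDensity b σ x) ≤
      Real.exp (4 / σ ^ 2 * ∫ u : ℝ, |g u|) := by
  have hσ2 : (0:ℝ) < σ ^ 2 := by positivity
  set c : ℝ := ∫ u : ℝ, |g u| with hc
  have hc0 : 0 ≤ c := integral_nonneg fun u => abs_nonneg _
  set K : ℝ := 2 / σ ^ 2 * c with hK
  have hK0 : 0 ≤ K := by positivity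
  -- interval integrability
  have hIb : ∀ x : ℝ, IntervalIntegrable (fun u => 2 * b u / σ ^ 2) volume 0 x := by
    intro x
    have h1 : IntegrableOn b (Set.uIcc 0 x) := hbl.integrableOn_isCompact isCompact_uIcc
    have h2 : IntegrableOn (fun u => 2 * b u / σ ^ 2) (Set.uIcc 0 x) :=
      (h1.const_mul 2).div_const (σ ^ 2)
    exact h2.intervalIntegrable
  have hIg : ∀ x : ℝ, IntervalIntegrable (fun u => 2 * g u / σ ^ 2) volume 0 x := by
    intro x
    have h1 : IntegrableOn g (Set.uIcc 0 x) := hgl.integrableOn_isCompact isCompact_uIcc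
    have h2 : IntegrableOn (fun u => 2 * g u / σ ^ 2) (Set.uIcc 0 x) :=
      (h1.const_mul 2).div_const (σ ^ 2)
    exact h2.intervalIntegrable
  have habs : Integrable fun u : ℝ => |2 * g u / σ ^ 2| :=
    ((hg1.const_mul 2).div_const (σ ^ 2)).abs
  -- bound on the g-integral
  have hGbound : ∀ x : ℝ, |∫ u in (0:ℝ)..x, 2 * g u / σ ^ 2| ≤ K := by
    intro x
    calc |∫ u in (0:ℝ)..x, 2 * g u / σ ^ 2|
        ≤ ∫ u in Set.uIoc (0:ℝ) x, ‖2 * g u / σ ^ 2‖ :=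
by
          rw [← Real.norm_eq_abs]
          exact _root_.intervalIntegral.norm_integral_le_integral_norm_uIoc
      _ ≤ ∫ u : ℝ, ‖2 * g u / σ ^ 2‖ := by
          exact setIntegral_le_integral habs (ae_of_all _ fun u => norm_nonneg _)
      _ = K := by
          simp only [Real.norm_eq_abs, hK, hc]
          rw [← integral_const_mul]
          congr 1 with u
          rw [abs_div, abs_mul, abs_of_pos hσ2]
          norm_num
          ring
  -- splitting
  have hsplit : ∀ x : ℝ, (∫ u in (0:ℝ)..x, 2 * (b u + g u) / σ ^ 2) =
      (∫ u in (0:ℝ)..x, 2 * b u / σ ^ 2) + ∫ u in (0:ℝ)..x, 2 * g u / σ ^ 2 := by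
    intro x
    rw [← intervalIntegral.integral_add (hIb x) (hIg x)]
    congr 1 with u
    ring
  -- normalizing constants
  have hCbpos : 0 < normConst b σ := by
    rw [normConst, integral_pos_iff_support_of_nonneg_ae]
    · have : (Function.support fun x : ℝ => Real.exp (∫ u in (0:ℝ)..x, 2 * b u / σ ^ 2))
          = Set.univ := by
        ext x; simp [Function.support, (Real.exp_pos _).ne']
      rw [this]; simp
    · filter_upwards with x using (Real.exp_pos _).le
    · exact hCb
  have hCbgpos : 0 < normConst (fun u => b u + g u) σ := by
    rw [normConst, integral_pos_iff_support_of_nonneg_ae]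
    · have : (Function.support fun x : ℝ =>
          Real.exp (∫ u in (0:ℝ)..x, 2 * (b u + g u) / σ ^ 2)) = Set.univ := by
        ext x; simp [Function.support, (Real.exp_pos _).ne']
      rw [this]; simp
    · filter_upwards with x using (Real.exp_pos _).le
    · exact hCbg
  have hCle : normConst b σ ≤ Real.exp K * normConst (fun u => b u + g u) σ := by
    rw [normConst, normConst, ← integral_const_mul]
    apply integral_mono hCb (hCbg.const_mul _)
    intro x
    dsimp only
    rw [hsplit x, ← Real.exp_add]
    apply Real.exp_le_exp.2
    have := (abs_le.1 (hGbound x)).1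
    linarith
  have hmain : ∀ x : ℝ, invDensity (fun u => b u + g u) σ x / invDensity b σ x ≤
      Real.exp (4 / σ ^ 2 * c) := by
    intro x
    have h1 : invDensity (fun u => b u + g u) σ x / invDensity b σ x =
        (normConst b σ / normConst (fun u => b u + g u) σ) *
          Real.exp (∫ u in (0:ℝ)..x, 2 * g u / σ ^ 2) := by
      rw [invDensity, invDensity, hsplit x, Real.exp_add]
      field_simp
    rw [h1]
    have h2 : normConst b σ / normConst (fun u => b u + g u) σ ≤ Real.exp K :=
      (div_le_iff₀ hCbgpos).2 hCle
    have h3 : Real.exp (∫ u in (0:ℝ)..x, 2 * g u / σ ^ 2) ≤ Real.exp K :=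
      Real.exp_le_exp.2 (abs_le.1 (hGbound x)).2
    calc (normConst b σ / normConst (fun u => b u + g u) σ) *
          Real.exp (∫ u in (0:ℝ)..x, 2 * g u / σ ^ 2)
        ≤ Real.exp K * Real.exp K := by
          apply mul_le_mul h2 h3 (Real.exp_pos _).le (Real.exp_pos _).le
      _ = Real.exp (4 / σ ^ 2 * c) := by
          rw [← Real.exp_add]
          congr 1
          rw [hK]; ring
  exact ⟨hmain, ciSup_le hmain⟩
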